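/- arXiv:1403.1677 — 2 statements merged into one kernel-verified Lean document; each statement's English description precedes it below -/
import Mathlib

section
/- A closed subset P of a normed space Y is 0-paraconvex if and only if P is convex. (Here P is α-paraconvex, 0 ≤ α ≤ 1, if whenever p ∈ Y and r > 0 satisfy dist(p,P) < r, then dist(q,P) ≤ αr for every q in the convex hull of B_r(p) ∩ P, where B_r(p) is the open ball of radius r about p.) -/
def Paraconvex {Y : Type*} [NormedAddCommGroup Y] [NormedSpace ℝ Y] (α : ℝ) (P : Set Y) : Prop :=
  ∀ (p : Y) (r : ℝ), 0 < r → Metric.infDist p P < r →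
    ∀ q ∈ convexHull ℝ (Metric.ball p r ∩ P), Metric.infDist q P ≤ α * r

theorem stmt0 {Y : Type*} [NormedAddCommGroup Y] [NormedSpace ℝ Y]
    (P : Set Y) (hne : P.Nonempty) (hcl : IsClosed P) :
    Paraconvex 0 P ↔ Convex ℝ P := by
  constructor
  · intro h x hx y hy a b ha hb hab
    set r := dist x y + 1 with hr_def
    have hr : (0:ℝ) < r := by positivity
    have h1 : Metric.infDist x P < r := by
      have := Metric.infDist_zero_of_mem hx
      linarith
    have hxS : x ∈ Metric.ball x r ∩ P := by
      refine ⟨Metric.mem_ball_self hr, hx⟩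
    have hyS : y ∈ Metric.ball x r ∩ P := by
      refine ⟨?_, hy⟩
      simp [Metric.mem_ball, dist_comm, hr_def]
    have hq : a • x + b • y ∈ convexHull ℝ (Metric.ball x r ∩ P) :=
      (convex_convexHull ℝ _) (subset_convexHull ℝ _ hxS) (subset_convexHull ℝ _ hyS) ha hb hab
    have h2 := h x r hr h1 _ hq
    have h3 : Metric.infDist (a • x + b • y) P = 0 :=
      le_antisymm (by linarith) (Metric.infDist_nonneg)
    exact (hcl.mem_iff_infDist_zero hne).2 h3
  · intro h p r hr hd q hq
    have : q ∈ P := by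
      have : convexHull ℝ (Metric.ball p r ∩ P) ⊆ P := by
        rw [Convex.convexHull_subset_iff h]
        exact Set.inter_subset_right
      exact this hq
    simp [Metric.infDist_zero_of_mem this]
end

section
/- Lower semi-continuity of the glued mapping in the Claim: let X, Y be topological spaces, A ⊆ X closed, U ⊆ X open with A ⊆ U, g : U → Y continuous, and ψ : X → 2^Y lower semi-continuous with nonempty values such that g(x) ∈ ψ(x) for all x ∈ A. Then the mapping ψ_g : X → 2^Y given by ψ_g(x) = {g(x)} for x ∈ A, ψ_g(x) = {g(x)} ∪ ψ(x) for x ∈ U \ A, and ψ_g(x) = ψ(x) for x ∈ X \ U, is lower semi-continuous. -/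
open Classical in
theorem stmt15 {X Y : Type*} [TopologicalSpace X] [TopologicalSpace Y]
    (A U : Set X) (hA : IsClosed A) (hU : IsOpen U) (hAU : A ⊆ U)
    (g : U → Y) (hg : Continuous g)
    (ψ : X → Set Y) (hne : ∀ x, (ψ x).Nonempty)
    (hψ : ∀ V : Set Y, IsOpen V → IsOpen {x | (ψ x ∩ V).Nonempty})
    (hsel : ∀ x (hx : x ∈ A), g ⟨x, hAU hx⟩ ∈ ψ x) :
    ∀ V : Set Y, IsOpen V → IsOpen {x |
      ((if h : x ∈ A then ({g ⟨x, hAU h⟩} : Set Y)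
        else if h : x ∈ U then insert (g ⟨x, h⟩) (ψ x)
        else ψ x) ∩ V).Nonempty} := by
  intro V hV
  have hW : IsOpen ((Subtype.val : U → X) '' (g ⁻¹' V)) :=
    hU.isOpenMap_subtype_val _ (hV.preimage hg)
  have hT : IsOpen ({x | (ψ x ∩ V).Nonempty} ∩ Aᶜ) :=
    (hψ V hV).inter hA.isOpen_compl
  convert hW.union hT using 1
  ext x
  simp only [Set.mem_setOf_eq, Set.mem_union, Set.mem_image, Set.mem_preimage,
    Set.mem_inter_iff, Set.mem_compl_iff]
  constructor
  · rintro ⟨y, hy, hyV⟩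
    by_cases hxA : x ∈ A
    · rw [dif_pos hxA] at hy
      exact Or.inl ⟨⟨x, hAU hxA⟩, by rwa [← hy], rfl⟩
    · rw [dif_neg hxA] at hy
      by_cases hxU : x ∈ U
      · rw [dif_pos hxU] at hy
        rcases hy with hy | hy
        · exact Or.inl ⟨⟨x, hxU⟩, by rwa [← hy], rfl⟩
        · exact Or.inr ⟨⟨y, hy, hyV⟩, hxA⟩
      · rw [dif_neg hxU] at hy
        exact Or.inr ⟨⟨y, hy, hyV⟩, hxA⟩
  · rintro (⟨⟨x', hx'U⟩, hgV, rfl⟩ | ⟨⟨y, hy, hyV⟩, hxA⟩)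
    · by_cases hxA : x' ∈ A
      · exact ⟨g ⟨x', hAU hxA⟩, by rw [dif_pos hxA]; exact rfl, hgV⟩
      · refine ⟨g ⟨x', hx'U⟩, ?_, hgV⟩
        rw [dif_neg hxA, dif_pos hx'U]
        exact Set.mem_insert _ _
    · by_cases hxU : x ∈ U
      · exact ⟨y, by rw [dif_neg hxA, dif_pos hxU]; exact Set.mem_insert_of_mem _ hy, hyV⟩
      · exact ⟨y, by rw [dif_neg hxA, dif_neg hxU]; exact hy, hyV⟩
end
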